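/- arXiv:2304.03985 — 2 statements merged into one kernel-verified Lean document; each statement's English description precedes it below -/
import Mathlib

section
/- The number of distinct tree transpositions on permutations of n elements is (n−1)². -/
/-- Full binary trees: every node is a leaf or has exactly two children.
`node l r` is an internal node with left subtree `l` and right subtree `r`. -/
inductive FBT : Type
  | leaf : FBT
  | node : FBT → FBT → FBT
  deriving DecidableEq

namespace FBT

/-- Number of internal nodes. -/
def internal : FBT → ℕ
  | leaf => 0
  | node l r => internal l + internal r + 1

/-- Height: maximum number of internal nodes on a root-to-leaf path. -/
def height : FBT → ℕ
  | leaf => 0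
  | node l r => max (height l) (height r) + 1

/-- Rank of a full binary tree (Ehrenfeucht–Haussler rank). -/
def rank : FBT → ℕ
  | leaf => 0
  | node l r => if rank l = rank r then rank l + 1 else max (rank l) (rank r)

/-- A full binary tree is skew if every internal node has at least one leaf child. -/
def skew : FBT → Prop
  | leaf => True
  | node l r => (l = leaf ∨ r = leaf) ∧ skew l ∧ skew r

/-- Pre-order traversal of the internal nodes, labeled by the in-order labeling
(1-indexed); `off` is the number of in-order labels used strictly to the left
of this subtree.  `T.preorderAux 0` is the tree permutation of `T`, as a list. -/
def preorderAux : FBT → ℕ → List ℕ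
  | leaf, _ => []
  | node l r, off =>
      (off + internal l + 1) :: (preorderAux l off ++ preorderAux r (off + internal l + 1))

/-- Number of internal nodes on the rightmost root-to-leaf path. -/
def rightPath : FBT → ℕ
  | leaf => 0
  | node _ r => rightPath r + 1

end FBT

/-- One (left or right) rotation, performed at some node of the tree. -/
inductive Rot : FBT → FBT → Prop
  | rotR (C D E : FBT) : Rot (FBT.node (FBT.node C D) E) (FBT.node C (FBT.node D E))
  | rotL (C D E : FBT) : Rot (FBT.node C (FBT.node D E)) (FBT.node (FBT.node C D) E)
  | congrL {l l' : FBT} (r : FBT) : Rot l l' → Rot (FBT.node l r) (FBT.node l' r)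
  | congrR {r r' : FBT} (l : FBT) : Rot r r' → Rot (FBT.node l r) (FBT.node l r')

/-- `RotChainP P k T1 T2`: there is a sequence of `k` rotations transforming `T1`
into `T2` in which every tree reached along the way satisfies `P`. -/
def RotChainP (P : FBT → Prop) : ℕ → FBT → FBT → Prop
  | 0, T1, T2 => T1 = T2
  | k+1, T1, T2 => ∃ T, Rot T1 T ∧ P T ∧ RotChainP P k T T2

/-- `RotChain k T1 T2`: `T1` can be transformed into `T2` by `k` rotations. -/
def RotChain : ℕ → FBT → FBT → Prop := RotChainP fun _ => True

/-- The rotation distance between two full binary trees. -/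
noncomputable def rotDist (T1 T2 : FBT) : ℕ := sInf {k | RotChain k T1 T2}

/-- The right comb on `n` internal nodes. -/
def rightComb : ℕ → FBT
  | 0 => FBT.leaf
  | n+1 => FBT.node FBT.leaf (rightComb n)

/-- The left comb on `n` internal nodes. -/
def leftComb : ℕ → FBT
  | 0 => FBT.leaf
  | n+1 => FBT.node (leftComb n) FBT.leaf

/-- The complete binary tree of height `r`. -/
def completeTree : ℕ → FBT
  | 0 => FBT.leaf
  | r+1 => FBT.node (completeTree r) (completeTree r)

/-- Replace the leftmost leaf of the first tree by the second tree. -/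
def attachLeftmost : FBT → FBT → FBT
  | FBT.leaf, S => S
  | FBT.node l r, S => FBT.node (attachLeftmost l S) r

/-- The transposition `δ_{i,j,k}` (1-indexed, `1 ≤ i < j < k`) applied to a list:
the consecutive blocks occupying positions `i..j-1` and `j..k-1` are swapped,
all other positions are left fixed. -/
def transposeList (i j k : ℕ) (l : List ℕ) : List ℕ :=
  l.take (i-1) ++ (l.drop (j-1)).take (k-j) ++ (l.drop (i-1)).take (j-i) ++ l.drop (k-1)

/-- `δ_{i,j,k}` is a tree transposition (on permutations of `n` elements): there are
full binary trees `T1, T2` with `n` internal nodes each, at rotation distance `1`,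
whose tree permutations `σ, τ` satisfy `δ_{i,j,k}(σ) = τ`. -/
def IsTreeTransposition (n i j k : ℕ) : Prop :=
  ∃ T1 T2 : FBT, T1.internal = n ∧ T2.internal = n ∧ rotDist T1 T2 = 1 ∧
    transposeList i j k (T1.preorderAux 0) = T2.preorderAux 0

/-- `σ` (a permutation of `Fin n`) is a tree permutation: the pre-order traversal of
some full binary tree with `n` internal nodes under the in-order labeling.
(Positions and values are converted to 1-indexed labels.) -/
def IsTreePerm (n : ℕ) (σ : Equiv.Perm (Fin n)) : Prop :=
  ∃ T : FBT, T.internal = n ∧ T.preorderAux 0 = List.ofFn fun i => (σ i : ℕ) + 1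

/-- `σ` is a skew permutation: the tree permutation of some full skew tree. -/
def IsSkewPerm (n : ℕ) (σ : Equiv.Perm (Fin n)) : Prop :=
  ∃ T : FBT, T.internal = n ∧ T.skew ∧ T.preorderAux 0 = List.ofFn fun i => (σ i : ℕ) + 1

/-- `SkewSim σ τ` (written `σ ∼ τ` in the paper): `τ` is obtained from `σ` (lists,
0-indexed) by a skew transposition: for some position `i`, `σ(i)` and `σ(i+1)` are
respectively the min and the max (or the max and the min) of the suffix starting at
position `i`, and `τ` is `σ` with the entries at positions `i` and `i+1` swapped. -/
def SkewSim (σ τ : List ℕ) : Prop :=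
  ∃ i : ℕ, i + 1 < σ.length ∧
    (((∀ x ∈ σ.drop i, σ.getD i 0 ≤ x) ∧ (∀ x ∈ σ.drop i, x ≤ σ.getD (i+1) 0)) ∨
     ((∀ x ∈ σ.drop i, x ≤ σ.getD i 0) ∧ (∀ x ∈ σ.drop i, σ.getD (i+1) 0 ≤ x))) ∧
    τ = σ.take i ++ [σ.getD (i+1) 0, σ.getD i 0] ++ σ.drop (i+2)

/-- The tree polynomial of a full binary tree: the sum over all leaves of `x^a y^b`,
where `a` (resp. `b`) is the number of left (resp. right) edges on the root-to-leaf
path.  `X 0` plays the role of `x` and `X 1` the role of `y`. -/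
noncomputable def treePoly : FBT → MvPolynomial (Fin 2) ℕ
  | FBT.leaf => 1
  | FBT.node l r => MvPolynomial.X 0 * treePoly l + MvPolynomial.X 1 * treePoly r


/-! ### Auxiliary machinery for Statement 4 -/

section Aux

open FBT

lemma rot_internal {T1 T2 : FBT} (h : Rot T1 T2) : T1.internal = T2.internal := by
  induction h with
  | rotR C D E => simp [FBT.internal]; omega
  | rotL C D E => simp [FBT.internal]; omega
  | congrL r h ih => simp [FBT.internal, ih]
  | congrR l h ih => simp [FBT.internal, ih]

lemma rot_ne {T1 T2 : FBT} (h : Rot T1 T2) : T1 ≠ T2 := by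
  induction h with
  | rotR C D E =>
      intro he
      injection he with h1 h2
      have := congrArg FBT.internal h1
      simp only [FBT.internal] at this
      omega
  | rotL C D E =>
      intro he
      injection he with h1 h2
      have := congrArg FBT.internal h1
      simp only [FBT.internal] at this
      omega
  | congrL r h ih => intro he; injection he with h1 h2; exact ih h1
  | congrR l h ih => intro he; injection he with h1 h2; exact ih h2

lemma preorderAux_perm (T : FBT) (off : ℕ) :
    (T.preorderAux off).Perm (List.range' (off+1) T.internal) := by
  induction T generalizing off with
  | leaf => simp [FBT.preorderAux, FBT.internal]
  | node l r ihl ihr =>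
      have hsplit : List.range' (off+1) (FBT.node l r).internal
          = List.range' (off+1) l.internal
            ++ (off + l.internal + 1) :: List.range' (off + l.internal + 2) r.internal := by
        have h1 : (FBT.node l r).internal = l.internal + (r.internal + 1) := by
          simp [FBT.internal]; omega
        rw [h1, ← List.range'_append (s := off+1) (m := l.internal) (n := r.internal+1) (step := 1)]
        congr 1
        have h2 : off + 1 + 1 * l.internal = off + l.internal + 1 := by omega
        rw [h2, List.range'_succ]
      rw [hsplit]
      simp only [FBT.preorderAux]
      have hperm : ((off + l.internal + 1)
            :: (l.preorderAux off ++ r.preorderAux (off + l.internal + 1))).Perm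
          ((off + l.internal + 1) :: (List.range' (off+1) l.internal
            ++ List.range' (off + l.internal + 2) r.internal)) :=
        List.Perm.cons _ ((ihl off).append (ihr (off + l.internal + 1)))
      exact hperm.trans List.perm_middle.symm

lemma preorderAux_length (T : FBT) (off : ℕ) : (T.preorderAux off).length = T.internal := by
  simpa using (preorderAux_perm T off).length_eq

lemma preorderAux_nodup (T : FBT) (off : ℕ) : (T.preorderAux off).Nodup :=
  (List.nodup_range' (s := off+1) (n := T.internal)).perm (preorderAux_perm T off).symm

lemma transposeList_blocks (P X Y Q : List ℕ) :
    transposeList (P.length+1) (P.length+X.length+1) (P.length+X.length+Y.length+1)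
      (P ++ (X ++ (Y ++ Q))) = P ++ (Y ++ (X ++ Q)) := by
  unfold transposeList
  have h1 : P.length + 1 - 1 = P.length := by omega
  have h2 : P.length + X.length + 1 - 1 = P.length + X.length := by omega
  have h3 : P.length + X.length + Y.length + 1 - (P.length + X.length + 1) = Y.length := by omega
  have h4 : P.length + X.length + 1 - (P.length + 1) = X.length := by omega
  have h5 : P.length + X.length + Y.length + 1 - 1 = P.length + X.length + Y.length := by omega
  rw [h1, h2, h3, h4, h5]
  rw [List.take_left' rfl]
  rw [show List.drop (P.length + X.length) (P ++ (X ++ (Y ++ Q))) = Y ++ Q from by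
    rw [show P ++ (X ++ (Y ++ Q)) = (P ++ X) ++ (Y ++ Q) by simp [List.append_assoc]]
    exact List.drop_left' (by simp)]
  rw [List.take_left' rfl]
  rw [show List.drop P.length (P ++ (X ++ (Y ++ Q))) = X ++ (Y ++ Q) from List.drop_left' rfl]
  rw [show List.take X.length (X ++ (Y ++ Q)) = X from List.take_left' rfl]
  rw [show List.drop (P.length + X.length + Y.length) (P ++ (X ++ (Y ++ Q))) = Q from by
    rw [show P ++ (X ++ (Y ++ Q)) = ((P ++ X) ++ Y) ++ Q by simp [List.append_assoc]]
    exact List.drop_left' (by simp; try omega)]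
  simp [List.append_assoc]

lemma transposeList_eq (a b c : ℕ) (σ : List ℕ) :
    transposeList (a+1) (b+1) (c+1) σ
      = σ.take a ++ ((σ.drop b).take (c-b) ++ ((σ.drop a).take (b-a) ++ σ.drop c)) := by
  unfold transposeList
  have h1 : a + 1 - 1 = a := by omega
  have h2 : b + 1 - 1 = b := by omega
  have h3 : c + 1 - (b+1) = c - b := by omega
  have h4 : b + 1 - (a+1) = b - a := by omega
  have h5 : c + 1 - 1 = c := by omega
  rw [h1, h2, h3, h4, h5, List.append_assoc, List.append_assoc]

section getE
variable {σ : List ℕ} {a b c : ℕ}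

lemma tl_get_lt (hab : a < b) (hbc : b < c) (hc : c ≤ σ.length) {p : ℕ} (hp : p < a) :
    (transposeList (a+1) (b+1) (c+1) σ)[p]? = σ[p]? := by
  rw [transposeList_eq]
  rw [List.getElem?_append, if_pos (show p < (σ.take a).length by simp; try omega)]
  rw [List.getElem?_take, if_pos hp]

lemma tl_get_start (hab : a < b) (hbc : b < c) (hc : c ≤ σ.length) :
    (transposeList (a+1) (b+1) (c+1) σ)[a]? = σ[b]? := by
  rw [transposeList_eq]
  rw [List.getElem?_append_right (by simp; try omega)]
  have hl : (σ.take a).length = a := by simp; try omega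
  rw [hl, Nat.sub_self]
  rw [List.getElem?_append,
    if_pos (show 0 < ((σ.drop b).take (c-b)).length by simp; try omega)]
  rw [List.getElem?_take, if_pos (by omega), List.getElem?_drop]
  simp

lemma tl_get_last (hab : a < b) (hbc : b < c) (hc : c ≤ σ.length) :
    (transposeList (a+1) (b+1) (c+1) σ)[c-1]? = σ[b-1]? := by
  rw [transposeList_eq]
  rw [List.getElem?_append_right (by simp; try omega)]
  have hl : (σ.take a).length = a := by simp; try omega
  rw [hl]
  rw [List.getElem?_append_right (by simp; try omega)]
  have hl2 : ((σ.drop b).take (c-b)).length = c - b := by simp; try omega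
  rw [hl2]
  rw [List.getElem?_append,
    if_pos (show c - 1 - a - (c-b) < ((σ.drop a).take (b-a)).length by simp; try omega)]
  rw [List.getElem?_take, if_pos (by omega), List.getElem?_drop]
  congr 1
  omega

lemma tl_get_ge (hab : a < b) (hbc : b < c) (hc : c ≤ σ.length) {p : ℕ} (hp : c ≤ p) :
    (transposeList (a+1) (b+1) (c+1) σ)[p]? = σ[p]? := by
  rw [transposeList_eq]
  rw [List.getElem?_append_right (by simp; try omega)]
  have hl : (σ.take a).length = a := by simp; try omega
  rw [hl]
  rw [List.getElem?_append_right (by simp; try omega)]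
  have hl2 : ((σ.drop b).take (c-b)).length = c - b := by simp; try omega
  rw [hl2]
  rw [List.getElem?_append_right (by simp; try omega)]
  have hl3 : ((σ.drop a).take (b-a)).length = b - a := by simp; try omega
  rw [hl3]
  rw [List.getElem?_drop]
  congr 1
  omega

end getE

lemma transposeList_unique {σ : List ℕ} (hnd : σ.Nodup)
    {a b c a' b' c' : ℕ} (hab : a < b) (hbc : b < c) (hc : c ≤ σ.length)
    (hab' : a' < b') (hbc' : b' < c') (hc' : c' ≤ σ.length)
    (heq : transposeList (a+1) (b+1) (c+1) σ = transposeList (a'+1) (b'+1) (c'+1) σ) :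
    a = a' ∧ b = b' ∧ c = c' := by
  have key : ∀ m m' : ℕ, m < σ.length → m' < σ.length → σ[m]? = σ[m']? → m = m' := by
    intro m m' hm hm' h
    exact (List.getElem?_inj hm hnd).1 h
  have ha : a = a' := by
    rcases lt_trichotomy a a' with h | h | h
    · have e1 := tl_get_start hab hbc hc
      rw [heq] at e1
      have e2 := tl_get_lt hab' hbc' hc' h
      rw [e2] at e1
      have := key a b (by omega) (by omega) e1
      omega
    · exact h
    · have e1 := tl_get_start hab' hbc' hc'
      rw [← heq] at e1
      have e2 := tl_get_lt hab hbc hc h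
      rw [e2] at e1
      have := key a' b' (by omega) (by omega) e1
      omega
  have hb : b = b' := by
    have e1 := tl_get_start hab hbc hc
    have e2 := tl_get_start hab' hbc' hc'
    rw [heq, ha] at e1
    rw [e2] at e1
    exact key b b' (by omega) (by omega) e1.symm
  have hcc : c = c' := by
    rcases lt_trichotomy c c' with h | h | h
    · have e1 := tl_get_last hab' hbc' hc'
      rw [← heq] at e1
      have e2 := tl_get_ge hab hbc hc (p := c'-1) (by omega)
      rw [e2] at e1
      have := key (c'-1) (b'-1) (by omega) (by omega) e1
      omega
    · exact h
    · have e1 := tl_get_last hab hbc hc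
      rw [heq] at e1
      have e2 := tl_get_ge hab' hbc' hc' (p := c-1) (by omega)
      rw [e2] at e1
      have := key (c-1) (b-1) (by omega) (by omega) e1
      omega
  exact ⟨ha, hb, hcc⟩

lemma rot_blocks {T1 T2 : FBT} (h : Rot T1 T2) :
    ∀ off, ∃ P X Y Q : List ℕ,
      T1.preorderAux off = P ++ (X ++ (Y ++ Q)) ∧
      T2.preorderAux off = P ++ (Y ++ (X ++ Q)) ∧
      0 < X.length ∧ 0 < Y.length ∧ (X.length = 1 ∨ Y.length = 1) := by
  induction h with
  | rotR C D E =>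
      intro off
      refine ⟨[], [off + (FBT.node C D).internal + 1],
        (off + C.internal + 1) :: C.preorderAux off,
        D.preorderAux (off + C.internal + 1)
          ++ E.preorderAux (off + (FBT.node C D).internal + 1),
        ?_, ?_, by simp, by simp, Or.inl rfl⟩
      · simp only [FBT.preorderAux]
        simp [List.append_assoc]
      · simp only [FBT.preorderAux, FBT.internal]
        rw [show off + C.internal + 1 + D.internal + 1
            = off + (C.internal + D.internal + 1) + 1 from by omega]
        simp [List.append_assoc]
  | rotL C D E =>
      intro off
      refine ⟨[], (off + C.internal + 1) :: C.preorderAux off,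
        [off + (FBT.node C D).internal + 1],
        D.preorderAux (off + C.internal + 1)
          ++ E.preorderAux (off + (FBT.node C D).internal + 1),
        ?_, ?_, by simp, by simp, Or.inr rfl⟩
      · simp only [FBT.preorderAux, FBT.internal]
        rw [show off + C.internal + 1 + D.internal + 1
            = off + (C.internal + D.internal + 1) + 1 from by omega]
        simp [List.append_assoc]
      · simp only [FBT.preorderAux]
        simp [List.append_assoc]
  | @congrL l l' r h ih =>
      intro off
      obtain ⟨P, X, Y, Q, h1, h2, hx, hy, hxy⟩ := ih off
      have hint : l'.internal = l.internal := (rot_internal h).symm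
      refine ⟨(off + l.internal + 1) :: P, X, Y,
        Q ++ r.preorderAux (off + l.internal + 1), ?_, ?_, hx, hy, hxy⟩
      · simp only [FBT.preorderAux]
        rw [h1]
        simp [List.append_assoc]
      · simp only [FBT.preorderAux, hint]
        rw [h2]
        simp [List.append_assoc]
  | @congrR r r' l h ih =>
      intro off
      obtain ⟨P, X, Y, Q, h1, h2, hx, hy, hxy⟩ := ih (off + l.internal + 1)
      refine ⟨(off + l.internal + 1) :: l.preorderAux off ++ P, X, Y, Q,
        ?_, ?_, hx, hy, hxy⟩
      · simp only [FBT.preorderAux]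
        rw [h1]
        simp [List.append_assoc]
      · simp only [FBT.preorderAux]
        rw [h2]
        simp [List.append_assoc]

lemma rotDist_eq_one {T1 T2 : FBT} (h : Rot T1 T2) : rotDist T1 T2 = 1 := by
  have h1 : RotChain 1 T1 T2 := ⟨T2, h, trivial, rfl⟩
  have hle : sInf {k | RotChain k T1 T2} ≤ 1 := Nat.sInf_le h1
  have hmem := Nat.sInf_mem (⟨1, h1⟩ : Set.Nonempty {k | RotChain k T1 T2})
  unfold rotDist
  by_contra hne
  have h0 : sInf {k | RotChain k T1 T2} = 0 := by omega
  rw [h0] at hmem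
  exact rot_ne h hmem

lemma rot_of_rotDist_one {T1 T2 : FBT} (h : rotDist T1 T2 = 1) : Rot T1 T2 := by
  have hne : {k | RotChain k T1 T2}.Nonempty := by
    by_contra hemp
    rw [Set.not_nonempty_iff_eq_empty] at hemp
    unfold rotDist at h
    rw [hemp, Nat.sInf_empty] at h
    exact one_ne_zero h.symm
  have hmem := Nat.sInf_mem hne
  unfold rotDist at h
  rw [h] at hmem
  obtain ⟨T, hr, -, hT⟩ := hmem
  exact hT ▸ hr

def wrap : ℕ → FBT → FBT
  | 0, t => t
  | m+1, t => FBT.node (wrap m t) FBT.leaf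

lemma wrap_internal (m : ℕ) (t : FBT) : (wrap m t).internal = t.internal + m := by
  induction m with
  | zero => rfl
  | succ m ih => simp only [wrap, FBT.internal, ih]; omega

lemma rot_wrap (m : ℕ) {T1 T2 : FBT} (h : Rot T1 T2) : Rot (wrap m T1) (wrap m T2) := by
  induction m with
  | zero => exact h
  | succ m ih => exact Rot.congrL _ ih

lemma wrap_blocks (m : ℕ) (C D E : FBT) :
    ∃ P X Y Q : List ℕ, P.length = m ∧ X.length = 1 ∧ Y.length = C.internal + 1 ∧
      ((wrap m (FBT.node (FBT.node C D) E)).preorderAux 0 = P ++ (X ++ (Y ++ Q))) ∧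
      ((wrap m (FBT.node C (FBT.node D E))).preorderAux 0 = P ++ (Y ++ (X ++ Q))) := by
  induction m with
  | zero =>
      refine ⟨[], [0 + (FBT.node C D).internal + 1],
        (0 + C.internal + 1) :: C.preorderAux 0,
        D.preorderAux (0 + C.internal + 1)
          ++ E.preorderAux (0 + (FBT.node C D).internal + 1),
        rfl, rfl, by simp [preorderAux_length], ?_, ?_⟩
      · simp only [wrap, FBT.preorderAux]
        simp [List.append_assoc]
      · simp only [wrap, FBT.preorderAux, FBT.internal]
        rw [show (0:ℕ) + C.internal + 1 + D.internal + 1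
            = 0 + (C.internal + D.internal + 1) + 1 from by omega]
        simp [List.append_assoc]
  | succ m ih =>
      obtain ⟨P, X, Y, Q, hP, hX, hY, h1, h2⟩ := ih
      have hint : (wrap m (FBT.node C (FBT.node D E))).internal
          = (wrap m (FBT.node (FBT.node C D) E)).internal := by
        simp only [wrap_internal, FBT.internal]; omega
      refine ⟨(0 + (wrap m (FBT.node (FBT.node C D) E)).internal + 1) :: P, X, Y,
        Q ++ FBT.leaf.preorderAux (0 + (wrap m (FBT.node (FBT.node C D) E)).internal + 1),
        by simp [hP], hX, hY, ?_, ?_⟩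
      · show FBT.preorderAux (FBT.node (wrap m (FBT.node (FBT.node C D) E)) FBT.leaf) 0 = _
        simp only [FBT.preorderAux]
        rw [h1]
        simp [List.append_assoc]
      · show FBT.preorderAux (FBT.node (wrap m (FBT.node C (FBT.node D E))) FBT.leaf) 0 = _
        simp only [FBT.preorderAux, hint]
        rw [h2]
        simp [List.append_assoc]

lemma rightComb_internal (r : ℕ) : (rightComb r).internal = r := by
  induction r with
  | zero => rfl
  | succ r ih => simp only [rightComb, FBT.internal, ih]; omega

lemma isTreeTransposition_iff {n i j k : ℕ} (h1 : 1 ≤ i) (hij : i < j) (hjk : j < k)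
    (hk : k ≤ n + 1) : IsTreeTransposition n i j k ↔ (j = i + 1 ∨ k = j + 1) := by
  constructor
  · rintro ⟨T1, T2, hn1, hn2, hd, htr⟩
    have hrot := rot_of_rotDist_one hd
    obtain ⟨P, X, Y, Q, hs1, hs2, hx, hy, hxy⟩ := rot_blocks hrot 0
    have hlen : (T1.preorderAux 0).length = n := by rw [preorderAux_length, hn1]
    have hlenPQ : P.length + X.length + Y.length + Q.length = n := by
      rw [← hlen, hs1]; simp; omega
    have hcan := transposeList_blocks P X Y Q
    rw [← hs1, ← hs2] at hcan
    have ht2 : transposeList ((i-1)+1) ((j-1)+1) ((k-1)+1) (T1.preorderAux 0)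
        = T2.preorderAux 0 := by
      rw [show (i-1)+1 = i from by omega, show (j-1)+1 = j from by omega,
        show (k-1)+1 = k from by omega]
      exact htr
    rw [← hcan] at ht2
    have := transposeList_unique (preorderAux_nodup T1 0)
      (show i-1 < j-1 by omega) (show j-1 < k-1 by omega) (by omega)
      (show P.length < P.length + X.length by omega)
      (show P.length + X.length < P.length + X.length + Y.length by omega)
      (by omega) ht2
    omega
  · intro hd
    rcases hd with hd | hd
    · -- j = i + 1
      set C := rightComb (k-i-2) with hC
      set E := rightComb (n+1-k) with hE
      obtain ⟨P, X, Y, Q, hP, hX, hY, hs1, hs2⟩ := wrap_blocks (i-1) C FBT.leaf E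
      refine ⟨wrap (i-1) (FBT.node (FBT.node C FBT.leaf) E),
        wrap (i-1) (FBT.node C (FBT.node FBT.leaf E)), ?_, ?_, ?_, ?_⟩
      · simp only [wrap_internal, FBT.internal, hC, hE, rightComb_internal]; omega
      · simp only [wrap_internal, FBT.internal, hC, hE, rightComb_internal]; omega
      · exact rotDist_eq_one (rot_wrap _ (Rot.rotR C FBT.leaf E))
      · have hcan := transposeList_blocks P X Y Q
        rw [← hs1, ← hs2] at hcan
        have eY : Y.length = k - i - 2 + 1 := by rw [hY, hC, rightComb_internal]
        have e1 : P.length + 1 = i := by omega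
        have e2 : P.length + X.length + 1 = j := by omega
        have e3 : P.length + X.length + Y.length + 1 = k := by omega
        rw [e1, e2, e3] at hcan
        exact hcan
    · -- k = j + 1
      set C := rightComb (j-i-1) with hC
      set D := rightComb (n-j) with hD
      obtain ⟨P, X, Y, Q, hP, hX, hY, hs1, hs2⟩ := wrap_blocks (i-1) C D FBT.leaf
      refine ⟨wrap (i-1) (FBT.node C (FBT.node D FBT.leaf)),
        wrap (i-1) (FBT.node (FBT.node C D) FBT.leaf), ?_, ?_, ?_, ?_⟩
      · simp only [wrap_internal, FBT.internal, hC, hD, rightComb_internal]; omega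
      · simp only [wrap_internal, FBT.internal, hC, hD, rightComb_internal]; omega
      · exact rotDist_eq_one (rot_wrap _ (Rot.rotL C D FBT.leaf))
      · have hcan := transposeList_blocks P Y X Q
        rw [← hs1, ← hs2] at hcan
        have eY : Y.length = j - i - 1 + 1 := by rw [hY, hC, rightComb_internal]
        have e1 : P.length + 1 = i := by omega
        have e2 : P.length + Y.length + 1 = j := by omega
        have e3 : P.length + Y.length + X.length + 1 = k := by omega
        rw [e1, e2, e3] at hcan
        exact hcan

end Aux

/-- the number of distinct tree transpositions on `n` elements is
`(n-1)²`. -/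
theorem count_tree_transpositions (n : ℕ) :
    Nat.card {t : ℕ × ℕ × ℕ // 1 ≤ t.1 ∧ t.1 < t.2.1 ∧ t.2.1 < t.2.2 ∧ t.2.2 ≤ n + 1 ∧
      IsTreeTransposition n t.1 t.2.1 t.2.2} = (n - 1) ^ 2 := by
  classical
  set g : ℕ × ℕ → ℕ × ℕ × ℕ :=
    fun ab => if ab.1 ≤ ab.2 then (ab.1, ab.1+1, ab.2+2) else (ab.2, ab.1+1, ab.1+2) with hg
  set F : Finset (ℕ × ℕ × ℕ) :=
    ((Finset.Icc 1 (n-1)) ×ˢ (Finset.Icc 1 (n-1))).image g with hF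
  have hgval : ∀ a b : ℕ, g (a, b) = if a ≤ b then (a, a+1, b+2) else (b, a+1, a+2) := by
    intro a b; rw [hg]
  have hiff : ∀ t : ℕ × ℕ × ℕ,
      (1 ≤ t.1 ∧ t.1 < t.2.1 ∧ t.2.1 < t.2.2 ∧ t.2.2 ≤ n + 1 ∧
        IsTreeTransposition n t.1 t.2.1 t.2.2) ↔ t ∈ F := by
    rintro ⟨i, j, k⟩
    dsimp only
    constructor
    · rintro ⟨h1, hij, hjk, hk, htt⟩
      have hd := (isTreeTransposition_iff h1 hij hjk hk).1 htt
      simp only [hF, Finset.mem_image, Finset.mem_product, Finset.mem_Icc]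
      by_cases hcase : j = i + 1
      · refine ⟨(i, k-2), ⟨⟨?_, ?_⟩, ⟨?_, ?_⟩⟩, ?_⟩
        · omega
        · omega
        · omega
        · omega
        · rw [hgval, if_pos (show i ≤ k - 2 by omega), Prod.mk.injEq, Prod.mk.injEq]
          omega
      · have hd' : k = j + 1 := by tauto
        refine ⟨(j-1, i), ⟨⟨?_, ?_⟩, ⟨?_, ?_⟩⟩, ?_⟩
        · omega
        · omega
        · omega
        · omega
        · rw [hgval, if_neg (show ¬ (j-1 ≤ i) by omega), Prod.mk.injEq, Prod.mk.injEq]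
          omega
    · intro ht
      simp only [hF, Finset.mem_image, Finset.mem_product, Finset.mem_Icc] at ht
      obtain ⟨⟨a, b⟩, ⟨⟨ha1, ha2⟩, ⟨hb1, hb2⟩⟩, hab⟩ := ht
      rw [hgval] at hab
      by_cases hcase : a ≤ b
      · rw [if_pos hcase, Prod.mk.injEq, Prod.mk.injEq] at hab
        obtain ⟨e1, e2, e3⟩ := hab
        have h1 : 1 ≤ i := by omega
        have hij : i < j := by omega
        have hjk : j < k := by omega
        have hk : k ≤ n + 1 := by omega
        exact ⟨h1, hij, hjk, hk, (isTreeTransposition_iff h1 hij hjk hk).2 (Or.inl (by omega))⟩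
      · rw [if_neg hcase, Prod.mk.injEq, Prod.mk.injEq] at hab
        obtain ⟨e1, e2, e3⟩ := hab
        have h1 : 1 ≤ i := by omega
        have hij : i < j := by omega
        have hjk : j < k := by omega
        have hk : k ≤ n + 1 := by omega
        exact ⟨h1, hij, hjk, hk, (isTreeTransposition_iff h1 hij hjk hk).2 (Or.inr (by omega))⟩
  have hcard : Nat.card {t : ℕ × ℕ × ℕ // 1 ≤ t.1 ∧ t.1 < t.2.1 ∧ t.2.1 < t.2.2 ∧
      t.2.2 ≤ n + 1 ∧ IsTreeTransposition n t.1 t.2.1 t.2.2} = Nat.card {t // t ∈ F} :=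
    Nat.card_congr (Equiv.subtypeEquivRight hiff)
  rw [hcard, Nat.card_eq_finsetCard]
  have hinj : Set.InjOn g ↑((Finset.Icc 1 (n-1)) ×ˢ (Finset.Icc 1 (n-1))) := by
    rintro ⟨a, b⟩ hab ⟨a', b'⟩ hab' heq
    rw [hgval, hgval] at heq
    simp only [Finset.coe_product, Set.mem_prod, Finset.mem_coe, Finset.mem_Icc] at hab hab'
    by_cases h1 : a ≤ b <;> by_cases h2 : a' ≤ b' <;>
      [rw [if_pos h1, if_pos h2, Prod.mk.injEq, Prod.mk.injEq] at heq;
       rw [if_pos h1, if_neg h2, Prod.mk.injEq, Prod.mk.injEq] at heq;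
       rw [if_neg h1, if_pos h2, Prod.mk.injEq, Prod.mk.injEq] at heq;
       rw [if_neg h1, if_neg h2, Prod.mk.injEq, Prod.mk.injEq] at heq] <;>
      · obtain ⟨e1, e2, e3⟩ := heq
        rw [Prod.mk.injEq]
        omega
  rw [hF, Finset.card_image_of_injOn hinj, Finset.card_product, Nat.card_Icc]
  have hn : n - 1 + 1 - 1 = n - 1 := by omega
  rw [hn, pow_two]
end

section
/- For any full binary tree T with n internal nodes and rank r ≥ 2, there is a sequence of at most 2n³ + n² rotations transforming T into a full binary tree of rank r − 1 such that every intermediate tree obtained in the sequence has rank at most r. -/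
section Auxiliary

open FBT

/-! ### Basic lemmas about `rank` and `internal` -/

lemma rank_node_def (l r : FBT) :
    rank (node l r) = if rank l = rank r then rank l + 1 else max (rank l) (rank r) := rfl

lemma internal_node_def (l r : FBT) :
    internal (node l r) = internal l + internal r + 1 := rfl

lemma rank_leaf_def : rank FBT.leaf = 0 := rfl

lemma eq_leaf_of_internal_eq_zero : ∀ T : FBT, internal T = 0 → T = FBT.leaf := by
  intro T h
  cases T with
  | leaf => rfl
  | node l r => simp [internal_node_def] at h

lemma rank_node_le {l r : FBT} {R : ℕ} (hl : rank l ≤ R) (hr : rank r < R) :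
    rank (node l r) ≤ R := by
  rw [rank_node_def]; split_ifs <;> omega

lemma le_rank_node_right (l r : FBT) : rank r ≤ rank (node l r) := by
  rw [rank_node_def]; split_ifs <;> omega

lemma rank_leaf_node_le {z : FBT} {R : ℕ} (hz : rank z ≤ R) (hR : 1 ≤ R) :
    rank (node FBT.leaf z) ≤ R := by
  rw [rank_node_def, rank_leaf_def]; split_ifs <;> omega

lemma safe_rot {C D B : FBT} {R : ℕ}
    (hold : rank (node (node C D) B) ≤ R)
    (hbad : ¬(rank C = R ∧ rank D = R - 1 ∧ rank B = R - 1)) :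
    rank (node C (node D B)) ≤ R := by
  simp only [rank_node_def] at hold ⊢
  split_ifs at hold ⊢ <;> omega

lemma two_pow_rank_le : ∀ T : FBT, 2 ^ (rank T) ≤ internal T + 1 := by
  intro T
  induction T with
  | leaf => simp [rank_leaf_def]
  | node l r ihl ihr =>
    rw [rank_node_def, internal_node_def]
    split_ifs with h
    · rw [← h] at ihr
      have := pow_succ 2 (rank l)
      omega
    · rcases le_total (rank l) (rank r) with h' | h'
      · rw [max_eq_right h']; omega
      · rw [max_eq_left h']; omega

/-! ### Lemmas about rotations and chains -/

lemma Rot.internal_eq {a b : FBT} (h : Rot a b) : a.internal = b.internal := by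
  induction h with
  | rotR C D E => simp [internal_node_def]; omega
  | rotL C D E => simp [internal_node_def]; omega
  | congrL r _ ih => simp [internal_node_def, ih]
  | congrR l _ ih => simp [internal_node_def, ih]

lemma Rot.symm {a b : FBT} (h : Rot a b) : Rot b a := by
  induction h with
  | rotR C D E => exact Rot.rotL C D E
  | rotL C D E => exact Rot.rotR C D E
  | congrL r _ ih => exact Rot.congrL r ih
  | congrR l _ ih => exact Rot.congrR l ih

lemma RotChainP.single {P : FBT → Prop} {a b : FBT} (h : Rot a b) (hb : P b) :
    RotChainP P 1 a b := ⟨b, h, hb, rfl⟩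

lemma RotChainP.trans {P : FBT → Prop} {k1 k2 : ℕ} {a b c : FBT}
    (h1 : RotChainP P k1 a b) (h2 : RotChainP P k2 b c) :
    RotChainP P (k1 + k2) a c := by
  induction k1 generalizing a with
  | zero =>
    have : a = b := h1
    subst this
    simpa using h2
  | succ k ih =>
    obtain ⟨t, hrot, hp, hch⟩ := h1
    rw [show k + 1 + k2 = (k + k2) + 1 by omega]
    exact ⟨t, hrot, hp, ih hch⟩

lemma RotChainP.last {P : FBT → Prop} {k : ℕ} {a b : FBT}
    (h : RotChainP P k a b) (ha : P a) : P b := by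
  induction k generalizing a with
  | zero => have : a = b := h; subst this; exact ha
  | succ k ih =>
    obtain ⟨t, _, hp, hch⟩ := h
    exact ih hch hp

lemma RotChainP.internal_eq {P : FBT → Prop} {k : ℕ} {a b : FBT}
    (h : RotChainP P k a b) : a.internal = b.internal := by
  induction k generalizing a with
  | zero => have : a = b := h; rw [this]
  | succ k ih =>
    obtain ⟨t, hrot, _, hch⟩ := h
    exact hrot.internal_eq.trans (ih hch)

lemma RotChainP.reverse {P : FBT → Prop} {k : ℕ} {a b : FBT}
    (h : RotChainP P k a b) (ha : P a) : RotChainP P k b a := by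
  induction k generalizing a with
  | zero => have : a = b := h; subst this; rfl
  | succ k ih =>
    obtain ⟨t, hrot, hp, hch⟩ := h
    have rev : RotChainP P k b t := ih hch hp
    have := rev.trans (RotChainP.single hrot.symm ha)
    simpa using this

lemma RotChainP.mono {P Q : FBT → Prop} {k : ℕ} {a b : FBT}
    (h : RotChainP P k a b) (hpq : ∀ S, P S → Q S) : RotChainP Q k a b := by
  induction k generalizing a with
  | zero => exact h
  | succ k ih =>
    obtain ⟨t, hrot, hp, hch⟩ := h
    exact ⟨t, hrot, hpq t hp, ih hch⟩

lemma RotChainP.liftL {P Q : FBT → Prop} {k : ℕ} {a b : FBT} (R0 : FBT)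
    (h : RotChainP P k a b) (hmap : ∀ S, P S → Q (node S R0)) :
    RotChainP Q k (node a R0) (node b R0) := by
  induction k generalizing a with
  | zero => have : a = b := h; subst this; rfl
  | succ k ih =>
    obtain ⟨t, hrot, hp, hch⟩ := h
    exact ⟨node t R0, Rot.congrL R0 hrot, hmap t hp, ih hch⟩

lemma RotChainP.liftR {P Q : FBT → Prop} {k : ℕ} {a b : FBT} (L0 : FBT)
    (h : RotChainP P k a b) (hmap : ∀ S, P S → Q (node L0 S)) :
    RotChainP Q k (node L0 a) (node L0 b) := by
  induction k generalizing a with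
  | zero => have : a = b := h; subst this; rfl
  | succ k ih =>
    obtain ⟨t, hrot, hp, hch⟩ := h
    exact ⟨node L0 t, Rot.congrR L0 hrot, hmap t hp, ih hch⟩

lemma RotChainP.strengthen {P Q : FBT → Prop} {k : ℕ} {a b : FBT}
    (h : RotChainP P k a b) (hq : ∀ S : FBT, S.internal = a.internal → Q S) :
    RotChainP Q k a b := by
  induction k generalizing a with
  | zero => exact h
  | succ k ih =>
    obtain ⟨t, hrot, _, hch⟩ := h
    exact ⟨t, hrot, hq t hrot.internal_eq.symm,
      ih hch (fun S hS => hq S (hS.trans hrot.internal_eq.symm))⟩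

/-! ### The left spine and the make-left-child-a-leaf procedure -/

/-- Number of internal nodes on the leftmost root-to-leaf path. -/
def lspine : FBT → ℕ
  | FBT.leaf => 0
  | FBT.node l _ => lspine l + 1

lemma lspine_le_internal : ∀ T : FBT, lspine T ≤ internal T := by
  intro T
  induction T with
  | leaf => simp [lspine]
  | node l r ihl _ => simp only [lspine, internal_node_def]; omega

lemma makeLeftLeaf (R : ℕ) (hR : 2 ≤ R) :
    ∀ N : ℕ, ∀ S : FBT, (internal S) ^ 3 + lspine S ≤ N → S ≠ FBT.leaf → rank S ≤ R →
      ∃ k B', k ≤ (internal S) ^ 2 + lspine S ∧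
        RotChainP (fun X => rank X ≤ R) k S (FBT.node FBT.leaf B') := by
  intro N
  induction N with
  | zero =>
    intro S hm hne _
    exfalso
    cases S with
    | leaf => exact hne rfl
    | node l r => simp [lspine] at hm
  | succ N ih =>
    intro S hm hne hrS
    cases S with
    | leaf => exact absurd rfl hne
    | node A B =>
      cases A with
      | leaf => exact ⟨0, B, by omega, rfl⟩
      | node C D =>
        by_cases hbad : rank C = R ∧ rank D = R - 1 ∧ rank B = R - 1
        · -- bad case: recurse into C first
          obtain ⟨hc, hd, hb⟩ := hbad
          have hCne : C ≠ FBT.leaf := by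
            intro h; subst h; rw [rank_leaf_def] at hc; omega
          have h2i : internal C + 2 ≤ internal (FBT.node (FBT.node C D) B) := by
            simp only [internal_node_def]; omega
          have hmC : internal C ^ 3 + lspine C ≤ N := by
            have hls := lspine_le_internal C
            have hcube : (internal C + 2) ^ 3 ≤ (internal (FBT.node (FBT.node C D) B)) ^ 3 :=
              Nat.pow_le_pow_left h2i 3
            have hx : internal C ^ 3 + internal C + 1 ≤ (internal C + 2) ^ 3 := by nlinarith
            have hls2 : lspine (FBT.node (FBT.node C D) B) = lspine C + 2 := by
              simp [lspine]
            omega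
          obtain ⟨kC, C', hkC, hchC⟩ := ih C hmC hCne (le_of_eq hc)
          have hC'node : rank (FBT.node FBT.leaf C') ≤ R := hchC.last (le_of_eq hc)
          have hC' : rank C' ≤ R := (le_rank_node_right _ _).trans hC'node
          have hdR : rank D < R := by omega
          have hbR : rank B < R := by omega
          have lift1 : RotChainP (fun X => rank X ≤ R) kC (FBT.node C D)
              (FBT.node (FBT.node FBT.leaf C') D) :=
            hchC.liftL D (fun X hX => rank_node_le hX hdR)
          have lift2 : RotChainP (fun X => rank X ≤ R) kC (FBT.node (FBT.node C D) B)
              (FBT.node (FBT.node (FBT.node FBT.leaf C') D) B) :=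
            lift1.liftL B (fun X hX => rank_node_le hX hbR)
          have hX : rank (FBT.node C' D) ≤ R := rank_node_le hC' hdR
          have hT2a : rank (FBT.node FBT.leaf (FBT.node C' D)) ≤ R :=
            rank_leaf_node_le hX (by omega)
          have hT2 : rank (FBT.node (FBT.node FBT.leaf (FBT.node C' D)) B) ≤ R :=
            rank_node_le hT2a hbR
          have hT3a : rank (FBT.node (FBT.node C' D) B) ≤ R := rank_node_le hX hbR
          have hT3 : rank (FBT.node FBT.leaf (FBT.node (FBT.node C' D) B)) ≤ R :=
            rank_leaf_node_le hT3a (by omega)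
          have rot2 : Rot (FBT.node (FBT.node (FBT.node FBT.leaf C') D) B)
              (FBT.node (FBT.node FBT.leaf (FBT.node C' D)) B) :=
            Rot.congrL B (Rot.rotR FBT.leaf C' D)
          have rot3 : Rot (FBT.node (FBT.node FBT.leaf (FBT.node C' D)) B)
              (FBT.node FBT.leaf (FBT.node (FBT.node C' D) B)) :=
            Rot.rotR FBT.leaf (FBT.node C' D) B
          have chain := lift2.trans ((RotChainP.single rot2 hT2).trans
            (RotChainP.single rot3 hT3))
          refine ⟨kC + 2, FBT.node (FBT.node C' D) B, ?_, chain⟩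
          · have hsq : internal C ^ 2 ≤ (internal (FBT.node (FBT.node C D) B)) ^ 2 :=
              Nat.pow_le_pow_left (by omega) 2
            have hls2 : lspine (FBT.node (FBT.node C D) B) = lspine C + 2 := by
              simp [lspine]
            omega
        · -- safe case: rotate right at the root
          have hnew : rank (FBT.node C (FBT.node D B)) ≤ R := safe_rot hrS hbad
          have hie : internal (FBT.node C (FBT.node D B))
              = internal (FBT.node (FBT.node C D) B) := by
            simp only [internal_node_def]; omega
          have hls1 : lspine (FBT.node C (FBT.node D B)) = lspine C + 1 := by simp [lspine]
          have hls2 : lspine (FBT.node (FBT.node C D) B) = lspine C + 2 := by simp [lspine]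
          have hm1 : internal (FBT.node C (FBT.node D B)) ^ 3
              + lspine (FBT.node C (FBT.node D B)) ≤ N := by
            rw [hie, hls1]; omega
          obtain ⟨k1, B', hk1, hch1⟩ := ih (FBT.node C (FBT.node D B)) hm1 (by simp) hnew
          refine ⟨1 + k1, B', ?_,
            (RotChainP.single (Rot.rotR C D B) hnew).trans hch1⟩
          rw [hie] at hk1
          omega

/-! ### Transforming into the right comb -/

/-- A potential: sum over all internal nodes of the internal size of the left child. -/
def muL : FBT → ℕ
  | FBT.leaf => 0
  | FBT.node l r => internal l + muL l + muL r

lemma muL_le_sq : ∀ T : FBT, muL T ≤ (internal T) ^ 2 := by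
  intro T
  induction T with
  | leaf => simp [muL]
  | node l r ihl ihr =>
    simp only [muL, internal_node_def]
    nlinarith [Nat.zero_le (internal l), Nat.zero_le (internal r)]

lemma toComb : ∀ N : ℕ, ∀ T : FBT, (internal T) ^ 3 + muL T ≤ N →
    ∃ k, k ≤ muL T ∧ RotChain k T (rightComb (internal T)) := by
  intro N
  induction N with
  | zero =>
    intro T hm
    cases T with
    | leaf => exact ⟨0, le_refl _, rfl⟩
    | node l r => exfalso; simp [internal_node_def, muL] at hm
  | succ N ih =>
    intro T hm
    cases T with
    | leaf => exact ⟨0, le_refl _, rfl⟩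
    | node A E =>
      cases A with
      | leaf =>
        have hmE : internal E ^ 3 + muL E ≤ N := by
          have : internal E ^ 3 < (internal (FBT.node FBT.leaf E)) ^ 3 := by
            apply Nat.pow_lt_pow_left _ (by norm_num)
            simp only [internal_node_def, show internal FBT.leaf = 0 from rfl]
            omega
          have hmu : muL (FBT.node FBT.leaf E) = muL E := by simp [muL, internal]
          omega
        obtain ⟨k, hk, hch⟩ := ih E hmE
        have lifted : RotChain k (FBT.node FBT.leaf E)
            (FBT.node FBT.leaf (rightComb (internal E))) :=
          RotChainP.liftR FBT.leaf hch (fun _ _ => trivial)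
        have hie : internal (FBT.node FBT.leaf E) = internal E + 1 := by
          simp [internal_node_def, internal]
        refine ⟨k, ?_, ?_⟩
        · have hmu : muL (FBT.node FBT.leaf E) = muL E := by simp [muL, internal]
          omega
        · rw [hie]
          exact lifted
      | node C D =>
        have hie : internal (FBT.node C (FBT.node D E))
            = internal (FBT.node (FBT.node C D) E) := by
          simp only [internal_node_def]; omega
        have hmu : muL (FBT.node C (FBT.node D E)) + internal C + 1
            = muL (FBT.node (FBT.node C D) E) := by
          simp only [muL, internal_node_def]; omega
        have hm1 : internal (FBT.node C (FBT.node D E)) ^ 3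
            + muL (FBT.node C (FBT.node D E)) ≤ N := by
          rw [hie]; omega
        obtain ⟨k, hk, hch⟩ := ih (FBT.node C (FBT.node D E)) hm1
        refine ⟨1 + k, by omega, ?_⟩
        rw [← hie]
        exact (RotChainP.single (Rot.rotR C D E) trivial).trans hch

/-! ### Spines with a complete tree at the bottom -/

lemma rank_completeTree : ∀ s : ℕ, rank (completeTree s) = s := by
  intro s
  induction s with
  | zero => rfl
  | succ s ihs => simp [completeTree, rank_node_def, ihs]

lemma internal_completeTree : ∀ s : ℕ, internal (completeTree s) + 1 = 2 ^ s := by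
  intro s
  induction s with
  | zero => rfl
  | succ s ihs => simp only [completeTree, internal_node_def, pow_succ]; omega

/-- `spineC s m`: `m` spine nodes (each with a leaf as left child) above a
complete tree of height `s`. -/
def spineC (s : ℕ) : ℕ → FBT
  | 0 => completeTree s
  | m + 1 => FBT.node FBT.leaf (spineC s m)

lemma rank_spineC (s : ℕ) (hs : 1 ≤ s) : ∀ m : ℕ, rank (spineC s m) = s := by
  intro m
  induction m with
  | zero => exact rank_completeTree s
  | succ m ihm =>
    rw [spineC, rank_node_def, ihm, rank_leaf_def, if_neg (by omega)]
    omega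

/-! ### The peeling procedure -/

lemma peel (r : ℕ) (hr : 2 ≤ r) :
    ∀ N : ℕ, ∀ W : FBT, internal W ≤ N → rank W ≤ r → 2 ^ (r - 1) ≤ internal W + 1 →
      ∃ k, k ≤ 2 * (internal W) ^ 3 + (internal W) ^ 2 ∧
        RotChainP (fun S => rank S ≤ r) k W (spineC (r - 1) (internal W + 1 - 2 ^ (r - 1))) := by
  have h2p : 2 ≤ 2 ^ (r - 1) := by
    calc 2 = 2 ^ 1 := by norm_num
    _ ≤ 2 ^ (r - 1) := Nat.pow_le_pow_right (by norm_num) (by omega)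
  intro N
  induction N with
  | zero =>
    intro W h0 _ hge
    exfalso
    omega
  | succ N ih =>
    intro W hN hrk hge
    by_cases hbase : internal W + 1 = 2 ^ (r - 1)
    · -- base case: convert to a complete tree via the right comb
      have hm0 : internal W + 1 - 2 ^ (r - 1) = 0 := by omega
      rw [hm0]
      obtain ⟨k1, hk1, hc1⟩ := toComb (internal W ^ 3 + muL W) W (le_refl _)
      obtain ⟨k2, hk2, hc2⟩ := toComb (internal (completeTree (r - 1)) ^ 3
        + muL (completeTree (r - 1))) (completeTree (r - 1)) (le_refl _)
      have hic : internal (completeTree (r - 1)) = internal W := by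
        have := internal_completeTree (r - 1); omega
      have key : ∀ S : FBT, S.internal = internal W → rank S ≤ r := by
        intro S hS
        have h1 := two_pow_rank_le S
        have h2 : 2 ^ rank S ≤ 2 ^ (r - 1) := by omega
        have h3 : rank S ≤ r - 1 := (Nat.pow_le_pow_iff_right (by norm_num)).mp h2
        omega
      have up1 : RotChainP (fun S => rank S ≤ r) k1 W (rightComb (internal W)) :=
        hc1.strengthen key
      have up2 : RotChainP (fun S => rank S ≤ r) k2 (completeTree (r - 1))
          (rightComb (internal W)) := by
        rw [← hic]
        exact hc2.strengthen (fun S hS => key S (by rw [hS, hic]))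
      have rev2 : RotChainP (fun S => rank S ≤ r) k2 (rightComb (internal W))
          (completeTree (r - 1)) := up2.reverse (by rw [rank_completeTree]; omega)
      refine ⟨k1 + k2, ?_, up1.trans rev2⟩
      have hb1 : k1 ≤ internal W ^ 2 := hk1.trans (muL_le_sq W)
      have hb2 : k2 ≤ internal W ^ 2 := by
        have := (muL_le_sq (completeTree (r - 1)))
        rw [hic] at this
        omega
      have hint1 : 1 ≤ internal W := by omega
      have : internal W ^ 2 ≤ internal W ^ 3 := Nat.pow_le_pow_right hint1 (by norm_num)
      omega
    · -- inductive step: make the left child of the root a leaf, then recurse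
      have hWge : 2 ^ (r - 1) ≤ internal W := by omega
      have h1W : 1 ≤ internal W := by omega
      have hne : W ≠ FBT.leaf := by
        intro h; subst h; simp [internal] at h1W
      obtain ⟨k1, B', hk1, hch1⟩ := makeLeftLeaf r hr (internal W ^ 3 + lspine W) W
        (le_refl _) hne hrk
      have hint : internal (FBT.node FBT.leaf B') = internal W := hch1.internal_eq.symm
      have hiB : internal B' + 1 = internal W := by
        simp only [internal_node_def] at hint
        simp only [show internal FBT.leaf = 0 from rfl] at hint
        omega
      have hrkB : rank B' ≤ r := (le_rank_node_right _ _).trans (hch1.last hrk)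
      have hgeB : 2 ^ (r - 1) ≤ internal B' + 1 := by omega
      obtain ⟨k2, hk2, hch2⟩ := ih B' (by omega) hrkB hgeB
      have lifted : RotChainP (fun S => rank S ≤ r) k2 (FBT.node FBT.leaf B')
          (FBT.node FBT.leaf (spineC (r - 1) (internal B' + 1 - 2 ^ (r - 1)))) :=
        hch2.liftR FBT.leaf (fun S hS => rank_leaf_node_le hS (by omega))
      have hm' : internal W + 1 - 2 ^ (r - 1) = (internal B' + 1 - 2 ^ (r - 1)) + 1 := by
        omega
      rw [hm']
      refine ⟨k1 + k2, ?_, hch1.trans lifted⟩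
      obtain ⟨p, hp⟩ : ∃ p, internal W = p + 1 := ⟨internal B', by omega⟩
      have hBp : internal B' = p := by omega
      rw [hp] at hk1 ⊢
      rw [hBp] at hk2
      have hls : lspine W ≤ p + 1 := by
        have := lspine_le_internal W; omega
      nlinarith [hk1, hk2, hls]

end Auxiliary

/-- any full binary tree `T` with `n` internal nodes and rank `r ≥ 2`
can be transformed into a tree of rank `r - 1` using at most `2n³ + n²` rotations,
with every intermediate tree of rank at most `r`. -/
theorem reduce_rank_by_one (n r : ℕ) (T : FBT)
    (hn : T.internal = n) (hr : T.rank = r) (h2 : 2 ≤ r) :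
    ∃ (k : ℕ) (T' : FBT), k ≤ 2 * n ^ 3 + n ^ 2 ∧ T'.rank = r - 1 ∧
      RotChainP (fun S => S.rank ≤ r) k T T' := by
  subst hn; subst hr
  have hge : 2 ^ (T.rank - 1) ≤ T.internal + 1 :=
    le_trans (Nat.pow_le_pow_right (by norm_num) (by omega)) (two_pow_rank_le T)
  obtain ⟨k, hk, hch⟩ := peel T.rank h2 T.internal T (le_refl _) (le_refl _) hge
  exact ⟨k, _, hk, rank_spineC _ (by omega) _, hch⟩
end
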